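/- arXiv:quant-ph/0404090 — 2 statements merged into one kernel-verified Lean document; each statement's English description precedes it below -/
import Mathlib

section
/- Stirling-type asymptotic: for fixed natural number n and with 2j = A² + O(A), as A → ∞, A^{2j−n}/√((2j−n)!) = (4πj)^{-1/4} · e^{A²/2 − (2j−A²)²/(4A²)} · (1 + o(1)). -/
open Filter Topology

lemma log_taylor_bound (x : ℝ) (hx : |x| ≤ 1/2) :
    |Real.log (1 + x) - x + x^2/2| ≤ 2*|x|^3 := by
  have h := Real.abs_log_sub_add_sum_range_le (x := -x) (by rw [abs_neg]; linarith : |(-x)| < 1) 2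
  norm_num [Finset.sum_range_succ] at h
  rw [show Real.log (1+x) - x + x^2/2 = -x + x^2/2 + Real.log (1+x) by ring]
  refine h.trans ?_
  rw [div_le_iff₀ (by linarith : (0:ℝ) < 1 - |x|)]
  nlinarith [pow_nonneg (abs_nonneg x) 3, abs_nonneg x]

lemma prod_near_one {a b c ε δ : ℝ} (hδ1 : δ ≤ 1) (hδε : 7*δ ≤ ε)
    (ha : |a - 1| ≤ δ) (hb : |b - 1| ≤ δ) (hc : |c - 1| ≤ δ) :
    |a * b * c - 1| ≤ ε := by
  have hδ0 : 0 ≤ δ := le_trans (abs_nonneg _) ha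
  rw [abs_le] at ha hb hc ⊢
  obtain ⟨ha1, ha2⟩ := ha
  obtain ⟨hb1, hb2⟩ := hb
  obtain ⟨hc1, hc2⟩ := hc
  have hb0 : (0:ℝ) ≤ b := by linarith
  have hc0 : (0:ℝ) ≤ c := by linarith
  have h1 : b*c ≤ (1+δ)*(1+δ) := mul_le_mul (by linarith) (by linarith) hc0 (by linarith)
  have h2 : (1-δ)*(1-δ) ≤ b*c := mul_le_mul (by linarith) (by linarith) (by linarith) hb0
  have h3 : a*(b*c) ≤ (1+δ)*((1+δ)*(1+δ)) :=
    mul_le_mul (by linarith) h1 (mul_nonneg hb0 hc0) (by linarith)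
  have h4 : (1-δ)*((1-δ)*(1-δ)) ≤ a*(b*c) :=
    mul_le_mul (by linarith) h2 (mul_nonneg (by linarith) (by linarith)) (by linarith)
  have hd2 : δ*δ ≤ δ := by nlinarith
  have hd3 : δ*(δ*δ) ≤ δ := by nlinarith
  constructor <;> nlinarith [h3, h4, hd2, hd3]

lemma F1_tendsto :
    Tendsto (fun m : ℕ => Real.pi ^ ((1:ℝ)/4) / Real.sqrt (Stirling.stirlingSeq m))
      atTop (𝓝 1) := by
  have h := Stirling.tendsto_stirlingSeq_sqrt_pi
  have h2 : Tendsto (fun m : ℕ => Real.sqrt (Stirling.stirlingSeq m)) atTop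
      (𝓝 (Real.sqrt (Real.sqrt Real.pi))) := h.sqrt
  have hπ := Real.pi_pos
  have hne : Real.sqrt (Real.sqrt Real.pi) ≠ 0 := by positivity
  have h3 := (tendsto_const_nhds (x := Real.pi ^ ((1:ℝ)/4)) (f := atTop (α := ℕ))).div h2 hne
  have hval : Real.sqrt (Real.sqrt Real.pi) = Real.pi ^ ((1:ℝ)/4) := by
    rw [Real.sqrt_eq_rpow, Real.sqrt_eq_rpow, ← Real.rpow_mul hπ.le]
    norm_num
  rw [hval, div_self (by positivity : Real.pi ^ ((1:ℝ)/4) ≠ 0)] at h3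
  exact h3

lemma F2_tendsto (n : ℕ) :
    Tendsto (fun m : ℕ => (((m:ℝ) + n) / m) ^ ((1:ℝ)/4)) atTop (𝓝 1) := by
  have h1 : Tendsto (fun m : ℕ => ((m:ℝ) + n) / m) atTop (𝓝 1) := by
    have he : ∀ᶠ m : ℕ in atTop, 1 + (n:ℝ) * (1/(m:ℝ)) = ((m:ℝ) + n) / m := by
      filter_upwards [eventually_gt_atTop 0] with m hm
      have : (m:ℝ) ≠ 0 := by positivity
      field_simp
    have h0 : Tendsto (fun m : ℕ => 1 + (n:ℝ) * (1/(m:ℝ))) atTop (𝓝 (1 + (n:ℝ) * 0)) :=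
      tendsto_const_nhds.add (tendsto_const_nhds.mul tendsto_one_div_atTop_nhds_zero_nat)
    rw [show (1:ℝ) + (n:ℝ) * 0 = 1 by ring] at h0
    exact h0.congr' he
  have h2 : ContinuousAt (fun x : ℝ => x ^ ((1:ℝ)/4)) 1 :=
    Real.continuousAt_rpow_const 1 ((1:ℝ)/4) (Or.inl one_ne_zero)
  have := h2.tendsto.comp h1
  simpa [Real.one_rpow, Function.comp_def] using this

lemma key_identity (A : ℝ) (hA : 0 < A) (n m : ℕ) (hm : 1 ≤ m) :
    A ^ m / Real.sqrt (Nat.factorial m) =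
      ((4 * Real.pi * (((m:ℝ) + n) / 2)) ^ (-(1/4) : ℝ) *
        Real.exp (A ^ 2 / 2 - (((m:ℝ) + n) - A ^ 2) ^ 2 / (4 * A ^ 2))) *
      ((Real.pi ^ ((1:ℝ)/4) / Real.sqrt (Stirling.stirlingSeq m)) *
        ((((m:ℝ) + n) / m) ^ ((1:ℝ)/4)) *
        Real.exp (((m:ℝ)/2) * (Real.log (A ^ 2 / m) + 1) - A ^ 2 / 2 +
          (((m:ℝ) + n) - A ^ 2) ^ 2 / (4 * A ^ 2))) := by
  have hπ := Real.pi_pos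
  have hm0 : (0:ℝ) < m := by exact_mod_cast hm
  have hs : 0 < Stirling.stirlingSeq m := by
    obtain ⟨k, rfl⟩ := Nat.exists_eq_add_of_le hm
    simpa [Nat.add_comm] using Stirling.stirlingSeq'_pos k
  have hJ : (0:ℝ) < (m:ℝ) + n := by positivity
  have hfac : (0:ℝ) < ((Nat.factorial m : ℕ) : ℝ) := by exact_mod_cast Nat.factorial_pos m
  have hfact : ((Nat.factorial m : ℕ) : ℝ)
      = Stirling.stirlingSeq m * (Real.sqrt (2*m) * ((m:ℝ)/Real.exp 1)^m) := by
    rw [Stirling.stirlingSeq, div_mul_cancel₀]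
    positivity
  have hlogfact : Real.log ((Nat.factorial m : ℕ) : ℝ)
      = Real.log (Stirling.stirlingSeq m)
        + ((Real.log 2 + Real.log m)/2 + (m:ℝ)*(Real.log m - 1)) := by
    rw [hfact, Real.log_mul hs.ne' (by positivity), Real.log_mul (by positivity) (by positivity),
      Real.log_sqrt (by positivity), Real.log_mul two_ne_zero hm0.ne', Real.log_pow,
      Real.log_div hm0.ne' (Real.exp_ne_zero 1), Real.log_exp]
  have hlog1 : Real.log (4*Real.pi*(((m:ℝ)+n)/2))
      = Real.log 2 + Real.log Real.pi + Real.log ((m:ℝ)+n) := by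
    rw [show (4:ℝ)*Real.pi*(((m:ℝ)+n)/2) = 2*(Real.pi*((m:ℝ)+n)) by ring,
      Real.log_mul two_ne_zero (by positivity), Real.log_mul hπ.ne' hJ.ne']
    ring
  have hlog2 : Real.log (((m:ℝ)+n)/m) = Real.log ((m:ℝ)+n) - Real.log m :=
    Real.log_div hJ.ne' hm0.ne'
  have hlog3 : Real.log (A^2/(m:ℝ)) = 2*Real.log A - Real.log m := by
    rw [Real.log_div (by positivity) hm0.ne', Real.log_pow]; push_cast; ring
  rw [show A ^ m = Real.exp ((m:ℝ) * Real.log A) by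
        rw [← Real.log_pow, Real.exp_log (pow_pos hA m)],
      show Real.sqrt ((Nat.factorial m : ℕ) : ℝ)
          = Real.exp (Real.log ((Nat.factorial m : ℕ) : ℝ) / 2) by
        rw [← Real.log_sqrt hfac.le, Real.exp_log (Real.sqrt_pos.mpr hfac)],
      show Real.sqrt (Stirling.stirlingSeq m)
          = Real.exp (Real.log (Stirling.stirlingSeq m) / 2) by
        rw [← Real.log_sqrt hs.le, Real.exp_log (Real.sqrt_pos.mpr hs)],
      Real.rpow_def_of_pos (show (0:ℝ) < 4*Real.pi*(((m:ℝ)+n)/2) by positivity),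
      Real.rpow_def_of_pos hπ,
      Real.rpow_def_of_pos (show (0:ℝ) < ((m:ℝ)+n)/m by positivity),
      ← Real.exp_sub, ← Real.exp_sub, ← Real.exp_add, ← Real.exp_add, ← Real.exp_add,
      ← Real.exp_add, Real.exp_eq_exp]
  rw [hlogfact, hlog1, hlog2, hlog3]
  ring

set_option maxHeartbeats 1000000 in
lemma E_bound (n : ℕ) (C A : ℝ) (m : ℕ) (hC : 0 ≤ C) (hA : 4*(C+(n:ℝ)) + 1 ≤ A)
    (hm : A^2/2 ≤ (m:ℝ)) (hB : |A^2 - (m:ℝ)| ≤ (C+(n:ℝ))*A) :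
    |((m:ℝ)/2) * (Real.log (A^2/(m:ℝ)) + 1) - A^2/2 + (((m:ℝ)+n) - A^2)^2/(4*A^2)|
      ≤ 8*(C+(n:ℝ)+1)^3 / A := by
  set c := C + (n:ℝ) with hc
  have hc0 : 0 ≤ c := by positivity
  have hA1 : 1 ≤ A := by linarith [mul_nonneg (by norm_num : (0:ℝ) ≤ 4) hc0]
  have hA0 : 0 < A := by linarith
  have hm0 : (0:ℝ) < m := lt_of_lt_of_le (by positivity) hm
  set B : ℝ := A^2 - (m:ℝ) with hBdef
  have htle : |B/(m:ℝ)| ≤ 2*c/A := by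
    rw [abs_div, abs_of_pos hm0]
    calc |B|/(m:ℝ) ≤ (c*A)/(A^2/2) :=
          div_le_div₀ (by positivity) hB (by positivity) hm
      _ = 2*c/A := by field_simp
  have ht2 : |B/(m:ℝ)| ≤ 1/2 := by
    refine htle.trans ?_
    rw [div_le_div_iff₀ hA0 (by norm_num)]
    linarith
  have hlog := log_taylor_bound (B/(m:ℝ)) ht2
  have hAm : A^2/(m:ℝ) = 1 + B/(m:ℝ) := by
    rw [hBdef]; field_simp; ring
  have hEeq : ((m:ℝ)/2) * (Real.log (A^2/(m:ℝ)) + 1) - A^2/2 + (((m:ℝ)+n) - A^2)^2/(4*A^2)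
      = ((m:ℝ)/2) * (Real.log (1 + B/(m:ℝ)) - B/(m:ℝ) + (B/(m:ℝ))^2/2)
        + (((n:ℝ)^2 - 2*(n:ℝ)*B)/(4*A^2) - B^3/(4*A^2*(m:ℝ))) := by
    rw [hAm, hBdef]
    field_simp
    ring
  rw [hEeq]
  have habs1 : |((m:ℝ)/2) * (Real.log (1 + B/(m:ℝ)) - B/(m:ℝ) + (B/(m:ℝ))^2/2)|
      ≤ 4*c^3/A := by
    rw [abs_mul, abs_of_nonneg (by positivity : (0:ℝ) ≤ (m:ℝ)/2)]
    calc ((m:ℝ)/2) * |Real.log (1 + B/(m:ℝ)) - B/(m:ℝ) + (B/(m:ℝ))^2/2|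
        ≤ ((m:ℝ)/2) * (2*|B/(m:ℝ)|^3) := by
          exact mul_le_mul_of_nonneg_left hlog (by positivity)
      _ = |B|^3/(m:ℝ)^2 := by
          rw [abs_div, abs_of_pos hm0, div_pow]
          field_simp
      _ ≤ (c*A)^3/((A^2/2)^2) := by
          apply div_le_div₀ (by positivity) (pow_le_pow_left₀ (abs_nonneg _) hB 3)
            (by positivity) (by nlinarith)
      _ = 4*c^3/A := by field_simp; ring
  have habs2 : |((n:ℝ)^2 - 2*(n:ℝ)*B)/(4*A^2) - B^3/(4*A^2*(m:ℝ))|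
      ≤ (c^2/(4*A) + c^2/(2*A)) + c^3/(2*A) := by
    have hBle : |B| ≤ c*A := hB
    have hn_le : (n:ℝ) ≤ c := by rw [hc]; linarith
    have hn0 : (0:ℝ) ≤ (n:ℝ) := Nat.cast_nonneg n
    refine (abs_sub _ _).trans (add_le_add ?_ ?_)
    · rw [abs_div, abs_of_pos (by positivity : (0:ℝ) < 4*A^2)]
      have h1 : |(n:ℝ)^2 - 2*(n:ℝ)*B| ≤ (n:ℝ)^2 + 2*(n:ℝ)*(c*A) := by
        refine (abs_sub _ _).trans ?_
        rw [abs_of_nonneg (by positivity : (0:ℝ) ≤ (n:ℝ)^2), abs_mul, abs_mul]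
        rw [abs_of_nonneg (by norm_num : (0:ℝ) ≤ (2:ℝ)), abs_of_nonneg hn0]
        have := mul_le_mul_of_nonneg_left hBle (by positivity : (0:ℝ) ≤ 2*(n:ℝ))
        nlinarith [abs_nonneg B]
      calc |(n:ℝ)^2 - 2*(n:ℝ)*B|/(4*A^2) ≤ ((n:ℝ)^2 + 2*(n:ℝ)*(c*A))/(4*A^2) := by
            gcongr
        _ ≤ (c^2*A + 2*c*(c*A))/(4*A^2) := by
            gcongr ?_ / _
            have e1 : (n:ℝ)^2 ≤ c^2 := by nlinarith
            have e2 : c^2 ≤ c^2*A := by nlinarith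
            have e3 : 2*(n:ℝ)*(c*A) ≤ 2*c*(c*A) := by
              nlinarith [mul_nonneg (mul_nonneg hc0 hA0.le) (sub_nonneg.mpr hn_le)]
            linarith
        _ = c^2/(4*A) + c^2/(2*A) := by field_simp; ring
    · rw [abs_div, abs_of_pos (by positivity : (0:ℝ) < 4*A^2*(m:ℝ)), abs_pow]
      calc |B|^3/(4*A^2*(m:ℝ)) ≤ (c*A)^3/(4*A^2*(A^2/2)) := by
            apply div_le_div₀ (by positivity) (pow_le_pow_left₀ (abs_nonneg _) hBle 3)
              (by positivity) (by nlinarith)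
        _ = c^3/(2*A) := by field_simp; ring
  calc |((m:ℝ)/2) * (Real.log (1 + B/(m:ℝ)) - B/(m:ℝ) + (B/(m:ℝ))^2/2)
        + (((n:ℝ)^2 - 2*(n:ℝ)*B)/(4*A^2) - B^3/(4*A^2*(m:ℝ)))|
      ≤ 4*c^3/A + ((c^2/(4*A) + c^2/(2*A)) + c^3/(2*A)) := by
        refine (abs_add_le _ _).trans (add_le_add habs1 habs2)
    _ ≤ 8*(c+1)^3 / A := by
        have hsum : 4*c^3/A + ((c^2/(4*A) + c^2/(2*A)) + c^3/(2*A))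
            = (4*c^3 + c^2/4 + c^2/2 + c^3/2)/A := by
          field_simp; ring
        rw [hsum]
        gcongr ?_ / _
        nlinarith
    _ = 8*(C+(n:ℝ)+1)^3 / A := by rw [hc]

set_option maxHeartbeats 1000000 in
/-- Stirling-type asymptotic: for fixed `n` and uniformly over `2j` with `|2j − A²| ≤ C·A`,
as `A → ∞`,
`A^{2j−n}/√((2j−n)!) = (4πj)^{-1/4} e^{A²/2 − (2j−A²)²/(4A²)} (1 + o(1))`.
Here `J = 2j ∈ ℕ`. -/
theorem stirling_asymptotic (n : ℕ) (C : ℝ) (hC : 0 < C) :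
    ∀ ε : ℝ, 0 < ε → ∃ A₀ : ℝ, ∀ A : ℝ, A₀ ≤ A → ∀ J : ℕ, n ≤ J →
      |(J : ℝ) - A ^ 2| ≤ C * A →
      |A ^ (J - n) / Real.sqrt (Nat.factorial (J - n)) -
          (4 * Real.pi * ((J : ℝ) / 2)) ^ (-(1 / 4) : ℝ) *
            Real.exp (A ^ 2 / 2 - ((J : ℝ) - A ^ 2) ^ 2 / (4 * A ^ 2))|
        ≤ ε * ((4 * Real.pi * ((J : ℝ) / 2)) ^ (-(1 / 4) : ℝ) *
            Real.exp (A ^ 2 / 2 - ((J : ℝ) - A ^ 2) ^ 2 / (4 * A ^ 2))) := by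
  intro ε hε
  have hn0 : (0:ℝ) ≤ (n:ℝ) := Nat.cast_nonneg n
  set δ := min (ε/7) 1 with hδdef
  have hδ0 : 0 < δ := lt_min (by linarith) one_pos
  have hδ1 : δ ≤ 1 := min_le_right _ _
  have hδε : 7*δ ≤ ε := by
    have := min_le_left (ε/7) 1
    have : δ ≤ ε/7 := min_le_left _ _
    linarith
  obtain ⟨M₁, hM₁⟩ := Metric.tendsto_atTop.mp F1_tendsto δ hδ0
  obtain ⟨M₂, hM₂⟩ := Metric.tendsto_atTop.mp (F2_tendsto n) δ hδ0
  set K := 8*(C+(n:ℝ)+1)^3 with hK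
  have hK0 : 0 < K := by positivity
  refine ⟨max (max (4*(C+(n:ℝ))+2) (2*C+2*(n:ℝ)+2)) (max (2*K/δ) (((max M₁ M₂ : ℕ):ℝ)+2)), ?_⟩
  intro A hA J hnJ hJA
  have hA1 : 4*(C+(n:ℝ))+1 ≤ A := by
    have h := le_trans (le_trans (le_max_left _ _) (le_max_left _ _)) hA
    linarith
  have hA2 : 2*C+2*(n:ℝ)+2 ≤ A :=
    le_trans (le_trans (le_max_right _ _) (le_max_left _ _)) hA
  have hA3 : 2*K/δ ≤ A :=
    le_trans (le_trans (le_max_left _ _) (le_max_right _ _)) hA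
  have hA4 : ((max M₁ M₂ : ℕ):ℝ)+2 ≤ A :=
    le_trans (le_trans (le_max_right _ _) (le_max_right _ _)) hA
  have hA0 : 0 < A := by linarith
  have hA2' : 2 ≤ A := by linarith
  obtain ⟨m, rfl⟩ : ∃ m, J = m + n := ⟨J - n, by omega⟩
  have hJcast : ((m + n : ℕ):ℝ) = (m:ℝ) + n := by push_cast; ring
  rw [hJcast] at hJA
  obtain ⟨hab1, hab2⟩ := abs_le.mp hJA
  have hnA1 : 0 ≤ (n:ℝ)*(A-1) := mul_nonneg hn0 (by linarith)
  have hAA : (2*C+2*(n:ℝ)+2)*A ≤ A*A := mul_le_mul_of_nonneg_right hA2 hA0.le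
  have hnA0 : 0 ≤ (n:ℝ)*A := mul_nonneg hn0 hA0.le
  have h2A : 2*A ≤ A*A := mul_le_mul_of_nonneg_right hA2' hA0.le
  have hmA : A^2/2 ≤ (m:ℝ) := by
    have hexp : (2*C+2*(n:ℝ)+2)*A = 2*(C*A) + 2*((n:ℝ)*A) + 2*A := by ring
    rw [hexp] at hAA
    have hA2sq : A^2 = A*A := sq A
    linarith
  have hm0 : (0:ℝ) < m := lt_of_lt_of_le (by positivity) hmA
  have hm1 : 1 ≤ m := by
    have h1 : (1:ℝ) ≤ (m:ℝ) := by
      have hA2sq : A^2 = A*A := sq A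
      linarith
    exact_mod_cast h1
  have hB : |A^2 - (m:ℝ)| ≤ (C+(n:ℝ))*A := by
    rw [abs_le, show (C+(n:ℝ))*A = C*A + (n:ℝ)*A by ring]
    constructor <;> linarith
  have hmM : max M₁ M₂ ≤ m := by
    have hAhalf : A ≤ A^2/2 := by
      have hA2sq : A^2 = A*A := sq A
      linarith
    have h1 : ((max M₁ M₂ : ℕ):ℝ) ≤ (m:ℝ) := by linarith
    exact_mod_cast h1
  have hF1 : |Real.pi ^ ((1:ℝ)/4) / Real.sqrt (Stirling.stirlingSeq m) - 1| ≤ δ := by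
    have h := hM₁ m (le_trans (le_max_left _ _) hmM)
    rw [Real.dist_eq] at h
    exact h.le
  have hF2 : |(((m:ℝ) + n) / m) ^ ((1:ℝ)/4) - 1| ≤ δ := by
    have h := hM₂ m (le_trans (le_max_right _ _) hmM)
    rw [Real.dist_eq] at h
    exact h.le
  have hEb := E_bound n C A m hC.le hA1 hmA hB
  have hKA : K/A ≤ δ/2 := by
    have h2K : 2*K ≤ A*δ := (div_le_iff₀ hδ0).mp hA3
    rw [div_le_div_iff₀ hA0 (by norm_num : (0:ℝ) < 2)]
    linarith [mul_comm A δ]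
  have hE1 : |((m:ℝ)/2) * (Real.log (A^2/(m:ℝ)) + 1) - A^2/2 + (((m:ℝ)+n) - A^2)^2/(4*A^2)|
      ≤ δ/2 := by
    refine hEb.trans ?_
    rw [← hK]
    exact hKA
  have hexp : |Real.exp (((m:ℝ)/2) * (Real.log (A^2/(m:ℝ)) + 1) - A^2/2
      + (((m:ℝ)+n) - A^2)^2/(4*A^2)) - 1| ≤ δ := by
    have h1 : |((m:ℝ)/2) * (Real.log (A^2/(m:ℝ)) + 1) - A^2/2
        + (((m:ℝ)+n) - A^2)^2/(4*A^2)| ≤ 1 := le_trans hE1 (by linarith)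
    have h2 := Real.abs_exp_sub_one_le h1
    linarith [hE1]
  have hprod := prod_near_one hδ1 hδε hF1 hF2 hexp
  have key := key_identity A hA0 n m hm1
  simp only [Nat.add_sub_cancel]
  rw [hJcast]
  have hR0 : 0 < (4 * Real.pi * (((m:ℝ) + n) / 2)) ^ (-(1/4) : ℝ) *
      Real.exp (A ^ 2 / 2 - (((m:ℝ) + n) - A ^ 2) ^ 2 / (4 * A ^ 2)) :=
    mul_pos (Real.rpow_pos_of_pos (by positivity) _) (Real.exp_pos _)
  rw [key]
  set R := (4 * Real.pi * (((m:ℝ) + n) / 2)) ^ (-(1/4) : ℝ) *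
      Real.exp (A ^ 2 / 2 - (((m:ℝ) + n) - A ^ 2) ^ 2 / (4 * A ^ 2)) with hRdef
  have step : ∀ Y : ℝ, |Y - 1| ≤ ε → |R*Y - R| ≤ ε*R := by
    intro Y hY
    rw [show R*Y - R = R*(Y-1) by ring, abs_mul, abs_of_pos hR0, mul_comm]
    exact mul_le_mul_of_nonneg_right hY hR0.le
  exact step _ hprod
end

section
/- For a z-regular pure state ψ with Fock coefficients ψ_n = N c_n z^n/√(n!), |c_n| ≤ 1, and for r > 0, the state ψ' = e^{-r} exp(r a/z) ψ satisfies ‖ψ'‖² ≤ N² e^{z²}; moreover if ψ has integrable P-function P(β), then ψ' has P-function proportional to exp(2r(Re β / z − 1)) P(β), so ∫ exp(2r(Re β/z − 1)) P(β) d²β ≤ N² e^{z²} for all r > 0. -/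
open Complex MeasureTheory Nat Filter Topology

lemma aux_rexp_tsum (t : ℝ) : Real.exp t = ∑' n : ℕ, t ^ n / (n ! : ℝ) := by
  rw [Real.exp_eq_exp_ℝ, NormedSpace.exp_eq_tsum_div]

lemma aux_rexp_hasSum (t : ℝ) : HasSum (fun n : ℕ => t ^ n / (n ! : ℝ)) (Real.exp t) := by
  rw [Real.exp_eq_exp_ℝ]; exact NormedSpace.expSeries_div_hasSum_exp t

lemma aux_cexp_tsum (w : ℂ) : Complex.exp w = ∑' n : ℕ, w ^ n / (n ! : ℂ) := by
  rw [Complex.exp_eq_exp_ℂ, NormedSpace.exp_eq_tsum_div]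

lemma aux_cexp_hasSum (w : ℂ) : HasSum (fun n : ℕ => w ^ n / (n ! : ℂ)) (Complex.exp w) := by
  rw [Complex.exp_eq_exp_ℂ]; exact NormedSpace.expSeries_div_hasSum_exp w

lemma aux_pow_le_fact_mul_exp (t : ℝ) (ht : 0 ≤ t) (m : ℕ) : t ^ m ≤ (m ! : ℝ) * Real.exp t := by
  have h := Real.sum_le_exp_of_nonneg ht (m+1)
  have h2 : t ^ m / (m ! : ℝ) ≤ Real.exp t := by
    refine le_trans ?_ h
    exact Finset.single_le_sum (f := fun i => t ^ i / (i ! : ℝ))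
      (fun i _ => by positivity) (Finset.self_mem_range_succ m)
  have hm : (0:ℝ) < (m ! : ℝ) := by positivity
  calc t ^ m = (m ! : ℝ) * (t ^ m / (m ! : ℝ)) := by field_simp
  _ ≤ (m ! : ℝ) * Real.exp t := by exact mul_le_mul_of_nonneg_left h2 hm.le

lemma aux_exp_quad (a t : ℝ) (ha : 0 ≤ a) (ht : 0 ≤ t) :
    Real.exp (a*t - t^2) ≤ Real.exp (a^2) := by
  apply Real.exp_le_exp.2; nlinarith [sq_nonneg (t - a), sq_nonneg t]

lemma aux_S_summable (c : ℕ → ℂ) (hc : ∀ n, ‖c n‖ ≤ 1) (r : ℝ) (hr : 0 ≤ r) (n : ℕ) :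
    Summable fun m : ℕ => c (n + m) * (r:ℂ) ^ m / (m ! : ℂ) := by
  apply Summable.of_norm
  apply Summable.of_nonneg_of_le (fun m => norm_nonneg _) _ (Real.summable_pow_div_factorial r)
  intro m
  rw [norm_div, norm_mul, norm_pow, Complex.norm_real, Complex.norm_natCast]
  rw [Real.norm_eq_abs, _root_.abs_of_nonneg hr]
  apply div_le_div_of_nonneg_right _ (by positivity)
  calc ‖c (n+m)‖ * r ^ m ≤ 1 * r ^ m := by
          apply mul_le_mul_of_nonneg_right (hc _) (by positivity)
    _ = r ^ m := one_mul _

lemma aux_S_norm (c : ℕ → ℂ) (hc : ∀ n, ‖c n‖ ≤ 1) (r : ℝ) (hr : 0 ≤ r) (n : ℕ) :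
    ‖∑' m : ℕ, c (n + m) * (r:ℂ) ^ m / (m ! : ℂ)‖ ≤ Real.exp r := by
  refine le_trans (norm_tsum_le_tsum_norm ((aux_S_summable c hc r hr n).norm)) ?_
  rw [aux_rexp_tsum r]
  apply Summable.tsum_le_tsum _ ((aux_S_summable c hc r hr n).norm) (Real.summable_pow_div_factorial r)
  intro m
  rw [norm_div, norm_mul, norm_pow, Complex.norm_real, Complex.norm_natCast,
    Real.norm_eq_abs, _root_.abs_of_nonneg hr]
  apply div_le_div_of_nonneg_right _ (by positivity)
  calc ‖c (n+m)‖ * r ^ m ≤ 1 * r ^ m :=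
          mul_le_mul_of_nonneg_right (hc _) (by positivity)
    _ = r ^ m := one_mul _

lemma aux_int_c (P : ℂ → ℝ) (hP : Integrable P) (H : ℂ → ℂ) (hH : Continuous H)
    (C : ℝ) (hC : ∀ β, ‖H β‖ ≤ C) : Integrable fun β => H β * (P β : ℂ) :=
  Integrable.bdd_mul hP.ofReal hH.aestronglyMeasurable (Filter.Eventually.of_forall hC)

lemma aux_int_r (P : ℂ → ℝ) (hP : Integrable P) (H : ℂ → ℝ) (hH : Continuous H)
    (C : ℝ) (hC : ∀ β, ‖H β‖ ≤ C) : Integrable fun β => H β * P β :=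
  Integrable.bdd_mul hP hH.aestronglyMeasurable (Filter.Eventually.of_forall hC)

lemma aux_psi'_le (c : ℕ → ℂ) (hc : ∀ n, ‖c n‖ ≤ 1) (N z r : ℝ)
    (hN : 0 ≤ N) (hz : 0 ≤ z) (hr : 0 ≤ r) (n : ℕ) :
    ‖(N : ℂ) * ((Real.exp (-r) : ℂ) * ∑' m : ℕ, c (n + m) * (r : ℂ) ^ m /
        (m ! : ℂ)) * (z : ℂ) ^ n / (Real.sqrt (n !) : ℂ)‖ ^ 2
      ≤ N ^ 2 * (z ^ 2) ^ n / (n ! : ℝ) := by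
  have hsq : (0:ℝ) ≤ Real.sqrt (n !) := Real.sqrt_nonneg _
  have h1 : ‖(N : ℂ) * ((Real.exp (-r) : ℂ) * ∑' m : ℕ, c (n + m) * (r : ℂ) ^ m /
        (m ! : ℂ)) * (z : ℂ) ^ n / (Real.sqrt (n !) : ℂ)‖ ≤ N * z ^ n / Real.sqrt (n !) := by
    simp only [norm_div, norm_mul, norm_pow, Complex.norm_real, Real.norm_eq_abs,
      _root_.abs_of_nonneg hN, _root_.abs_of_nonneg hz, _root_.abs_of_nonneg hsq]
    apply div_le_div_of_nonneg_right _ _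
    · have := aux_S_norm c hc r hr n
      have h2 : |Real.exp (-r)| * ‖∑' m : ℕ, c (n + m) * (r:ℂ) ^ m / (m ! : ℂ)‖ ≤ 1 := by
        rw [_root_.abs_of_nonneg (Real.exp_nonneg _)]
        calc Real.exp (-r) * ‖∑' m : ℕ, c (n + m) * (r:ℂ) ^ m / (m ! : ℂ)‖
            ≤ Real.exp (-r) * Real.exp r :=
              mul_le_mul_of_nonneg_left this (Real.exp_nonneg _)
        _ = 1 := by rw [← Real.exp_add]; simp
      calc N * (|Real.exp (-r)| * ‖∑' m : ℕ, c (n + m) * (r:ℂ) ^ m / (m ! : ℂ)‖) * z ^ n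
          ≤ N * 1 * z ^ n := by
            apply mul_le_mul_of_nonneg_right (mul_le_mul_of_nonneg_left h2 hN) (by positivity)
      _ = N * z ^ n := by ring
    · exact Real.sqrt_pos.2 (Nat.cast_pos.2 (Nat.factorial_pos n)) |>.le
  calc ‖(N : ℂ) * ((Real.exp (-r) : ℂ) * ∑' m : ℕ, c (n + m) * (r : ℂ) ^ m /
        (m ! : ℂ)) * (z : ℂ) ^ n / (Real.sqrt (n !) : ℂ)‖ ^ 2
      ≤ (N * z ^ n / Real.sqrt (n !)) ^ 2 := by
        apply pow_le_pow_left₀ (norm_nonneg _) h1 2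
  _ = N ^ 2 * (z ^ 2) ^ n / (n ! : ℝ) := by
        rw [div_pow, mul_pow, Real.sq_sqrt (by positivity), ← pow_mul, ← pow_mul, mul_comm n 2]

lemma aux_term_le (c : ℕ → ℂ) (hc : ∀ n, ‖c n‖ ≤ 1) (r : ℝ) (hr : 0 ≤ r) (n m : ℕ) :
    ‖c (n + m) * (r:ℂ) ^ m / (m ! : ℂ)‖ ≤ r ^ m / (m ! : ℝ) := by
  rw [norm_div, norm_mul, norm_pow, Complex.norm_real, Complex.norm_natCast,
    Real.norm_eq_abs, _root_.abs_of_nonneg hr]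
  apply div_le_div_of_nonneg_right _ (Nat.cast_pos.2 (Nat.factorial_pos m)).le
  calc ‖c (n+m)‖ * r ^ m ≤ 1 * r ^ m :=
        mul_le_mul_of_nonneg_right (hc _) (by positivity)
  _ = r ^ m := one_mul _

lemma aux_H_bound (x t : ℝ) (hx : 0 < x) (ht : 0 ≤ t) (p j k : ℕ) :
    (x*t)^j / (j ! : ℝ) * ((x*t)^k / (k ! : ℝ)) * (Real.exp (-(t^2)) * t^(2*p)) ≤
      ((2*p)! : ℝ) * Real.exp ((1+4*x)^2) * ((1/2)^j * (1/2)^k) := by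
  have h1 : ∀ i : ℕ, (x*t)^i / (i ! : ℝ) ≤ (1/2)^i * Real.exp (2*x*t) := by
    intro i
    have key := aux_pow_le_fact_mul_exp (2*x*t) (by positivity) i
    have h2 : (x*t)^i = (2*x*t)^i / 2^i := by
      rw [show (2:ℝ)*x*t = 2*(x*t) by ring, mul_pow, mul_pow]
      field_simp
      ring
    have hfac : (0:ℝ) < (i ! : ℝ) := Nat.cast_pos.2 (Nat.factorial_pos i)
    calc (x*t)^i / (i ! : ℝ) ≤ ((i ! : ℝ) * Real.exp (2*x*t) / 2^i) / (i ! : ℝ) := by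
          rw [h2]; gcongr
    _ = (1/2)^i * Real.exp (2*x*t) := by
          rw [div_pow, one_pow]; field_simp
  have h3 : t^(2*p) ≤ ((2*p)! : ℝ) * Real.exp t := aux_pow_le_fact_mul_exp t ht (2*p)
  calc (x*t)^j / (j ! : ℝ) * ((x*t)^k / (k ! : ℝ)) * (Real.exp (-(t^2)) * t^(2*p))
      ≤ ((1/2)^j * Real.exp (2*x*t)) * ((1/2)^k * Real.exp (2*x*t)) *
        (Real.exp (-(t^2)) * (((2*p)! : ℝ) * Real.exp t)) := by
        have e1 := h1 j; have e2 := h1 k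
        gcongr <;> positivity
  _ = ((2*p)! : ℝ) * Real.exp ((1+4*x)*t - t^2) * ((1/2)^j * (1/2)^k) := by
        rw [show (1+4*x)*t - t^2 = 2*x*t + (2*x*t + (-(t^2) + t)) by ring,
          Real.exp_add, Real.exp_add, Real.exp_add]
        ring
  _ ≤ ((2*p)! : ℝ) * Real.exp ((1+4*x)^2) * ((1/2)^j * (1/2)^k) := by
        have := aux_exp_quad (1+4*x) t (by positivity) ht
        gcongr

lemma aux_Rp (c : ℕ → ℂ) (hc : ∀ n, ‖c n‖ ≤ 1) (N z r : ℝ)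
    (hN : 0 < N) (hz : 0 < z) (hr : 0 < r)
    (ψ : ℕ → ℂ)
    (hψ : ∀ n, ψ n = (N : ℂ) * c n * (z : ℂ) ^ n / (Real.sqrt (n !) : ℂ))
    (P : ℂ → ℝ) (hPint : Integrable P)
    (hrep : ∀ m n : ℕ,
      (∫ β : ℂ, (P β : ℂ) * Complex.exp (-((‖β‖ ^ 2 : ℝ) : ℂ)) * β ^ m *
          (starRingEnd ℂ β) ^ n / (Real.sqrt (m ! * n !) : ℂ))
        = ψ m * starRingEnd ℂ (ψ n))
    (p : ℕ) :
    (∫ β : ℂ, P β * Real.exp (2*(r/z)*β.re - ‖β‖^2) * ‖β‖^(2*p)) =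
      ‖(N:ℂ) * (z:ℂ)^p * ∑' m : ℕ, c (p+m) * (r:ℂ)^m / (m ! : ℂ)‖^2 := by
  set x : ℝ := r / z with hxdef
  have hx : 0 < x := div_pos hr hz
  set H : ℕ × ℕ → ℂ → ℂ := fun jk β =>
    ((x:ℂ)*β)^jk.1 / (jk.1 ! : ℂ) * ((((x:ℂ)) * (starRingEnd ℂ β))^jk.2 / (jk.2 ! : ℂ)) *
      (Complex.exp (-((‖β‖ ^ 2 : ℝ) : ℂ)) * β^p * (starRingEnd ℂ β)^p) with hHdef
  set F : ℕ × ℕ → ℂ → ℂ := fun jk β => H jk β * (P β : ℂ) with hFdef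
  set A : ℕ → ℂ := fun j => ((N:ℂ) * (z:ℂ)^p) * (c (p+j) * (r:ℂ)^j / (j ! : ℂ)) with hAdef
  set Cp : ℝ := ((2*p)! : ℝ) * Real.exp ((1+4*x)^2) with hCp
  -- pointwise norm bound on H
  have hHnorm : ∀ jk : ℕ × ℕ, ∀ β : ℂ, ‖H jk β‖ ≤ Cp * ((1/2)^jk.1 * (1/2)^jk.2) := by
    intro ⟨j, k⟩ β
    have hexp : ‖Complex.exp (-((‖β‖ ^ 2 : ℝ) : ℂ))‖ = Real.exp (-(‖β‖^2)) := by
      rw [Complex.norm_exp]; simp [← Complex.ofReal_pow]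
    have h1 : ‖H (j,k) β‖ = (x*‖β‖)^j / (j ! : ℝ) * ((x*‖β‖)^k / (k ! : ℝ)) *
        (Real.exp (-(‖β‖^2)) * ‖β‖^(2*p)) := by
      simp only [hHdef, norm_mul, norm_div, norm_pow, Complex.norm_real,
        Complex.norm_natCast, RCLike.norm_conj,
        Real.norm_eq_abs, _root_.abs_of_nonneg hx.le]
      rw [hexp, pow_mul]
      ring
    rw [h1]
    exact aux_H_bound x ‖β‖ hx (norm_nonneg β) p j k
  -- continuity of H
  have hHcont : ∀ jk : ℕ × ℕ, Continuous (H jk) := by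
    intro jk
    rw [hHdef]
    have h1 : Continuous fun β : ℂ => Complex.exp (-((‖β‖ ^ 2 : ℝ) : ℂ)) := by
      apply Complex.continuous_exp.comp
      exact (Complex.continuous_ofReal.comp ((continuous_norm (E := ℂ)).pow 2)).neg
    exact (((((continuous_const.mul continuous_id).pow _).div_const _).mul
      (((continuous_const.mul Complex.continuous_conj).pow _).div_const _)).mul
      ((h1.mul (continuous_pow p)).mul (Complex.continuous_conj.pow p)))
  have hFint : ∀ jk : ℕ × ℕ, Integrable (F jk) := by
    intro jk
    exact aux_int_c P hPint (H jk) (hHcont jk) _ (hHnorm jk)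
  have hFnorm : ∀ jk : ℕ × ℕ, ∀ β : ℂ, ‖F jk β‖ ≤ Cp * ((1/2)^jk.1 * (1/2)^jk.2) * |P β| := by
    intro jk β
    rw [hFdef]
    simp only [norm_mul, Complex.norm_real, Real.norm_eq_abs]
    exact mul_le_mul_of_nonneg_right (hHnorm jk β) (abs_nonneg _)
  have hsumint : Summable fun jk : ℕ × ℕ => ∫ β : ℂ, ‖F jk β‖ := by
    have hmaj : Summable fun jk : ℕ × ℕ =>
        (Cp * (∫ β : ℂ, |P β|) * (1/2)^jk.1) * ((1/2)^jk.2 : ℝ) := by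
      apply Summable.mul_of_nonneg (f := fun j : ℕ => Cp * (∫ β : ℂ, |P β|) * (1/2)^j)
        (g := fun k : ℕ => ((1/2):ℝ)^k)
      · exact (summable_geometric_two).mul_left _
      · exact summable_geometric_two
      · intro i
        have h0 : (0:ℝ) ≤ Cp := by positivity
        have h1 : (0:ℝ) ≤ ∫ β : ℂ, |P β| := integral_nonneg fun β => abs_nonneg _
        positivity
      · intro i; positivity
    apply Summable.of_nonneg_of_le _ _ hmaj
    · intro jk; exact integral_nonneg fun β => norm_nonneg _
    · intro jk
      calc (∫ β : ℂ, ‖F jk β‖) ≤ ∫ β : ℂ, Cp * ((1/2)^jk.1 * (1/2)^jk.2) * |P β| := by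
            apply integral_mono (hFint jk).norm _ (hFnorm jk)
            exact (hPint.abs.const_mul _)
      _ = (Cp * (∫ β : ℂ, |P β|) * (1/2)^jk.1) * ((1/2)^jk.2 : ℝ) := by
            rw [MeasureTheory.integral_const_mul]; ring
  -- pointwise series identity
  have hptw : ∀ β : ℂ, (∑' jk : ℕ × ℕ, F jk β) =
      ((P β * Real.exp (2*x*β.re - ‖β‖^2) * ‖β‖^(2*p) : ℝ) : ℂ) := by
    intro β
    have ha : Summable fun j : ℕ => ‖((x:ℂ)*β)^j / (j ! : ℂ)‖ := by
      refine (Real.summable_pow_div_factorial ‖(x:ℂ)*β‖).congr fun j => ?_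
      rw [norm_div, norm_pow, Complex.norm_natCast]
    have hb : Summable fun k : ℕ => ‖((x:ℂ)*(starRingEnd ℂ β))^k / (k ! : ℂ)‖ := by
      refine (Real.summable_pow_div_factorial ‖(x:ℂ)*(starRingEnd ℂ β)‖).congr fun k => ?_
      rw [norm_div, norm_pow, Complex.norm_natCast]
    have hbp : β^p * (starRingEnd ℂ β)^p = ((‖β‖^(2*p) : ℝ) : ℂ) := by
      rw [← mul_pow, Complex.mul_conj']
      push_cast
      ring
    calc (∑' jk : ℕ × ℕ, F jk β)
        = (∑' jk : ℕ × ℕ, ((x:ℂ)*β)^jk.1 / (jk.1 ! : ℂ) *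
            (((x:ℂ)*(starRingEnd ℂ β))^jk.2 / (jk.2 ! : ℂ))) *
          ((β^p * (starRingEnd ℂ β)^p) *
            (Complex.exp (-((‖β‖ ^ 2 : ℝ) : ℂ)) * (P β : ℂ))) := by
          rw [← tsum_mul_right]
          exact tsum_congr fun jk => by rw [hFdef, hHdef]; ring
    _ = Complex.exp ((x:ℂ)*β) * Complex.exp ((x:ℂ)*(starRingEnd ℂ β)) *
          ((β^p * (starRingEnd ℂ β)^p) *
            (Complex.exp (-((‖β‖ ^ 2 : ℝ) : ℂ)) * (P β : ℂ))) := by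
          rw [← tsum_mul_tsum_of_summable_norm ha hb, ← aux_cexp_tsum, ← aux_cexp_tsum]
    _ = ((P β * Real.exp (2*x*β.re - ‖β‖^2) * ‖β‖^(2*p) : ℝ) : ℂ) := by
          rw [← Complex.exp_add,
            show (x:ℂ)*β + (x:ℂ)*(starRingEnd ℂ β) = ((2*x*β.re : ℝ) : ℂ) by
              rw [← mul_add, Complex.add_conj]; push_cast; ring,
            hbp,
            show (-((‖β‖ ^ 2 : ℝ) : ℂ)) = ((-(‖β‖^2) : ℝ) : ℂ) by push_cast; ring,
            ← Complex.ofReal_exp, ← Complex.ofReal_exp,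
            show (2*x*β.re - ‖β‖^2 : ℝ) = 2*x*β.re + (-(‖β‖^2)) by ring,
            Real.exp_add]
          push_cast
          ring
  -- evaluation of each integral
  have heach : ∀ jk : ℕ × ℕ, (∫ β : ℂ, F jk β) = A jk.1 * starRingEnd ℂ (A jk.2) := by
    intro ⟨j, k⟩
    have hbase := hrep (p+j) (p+k)
    rw [integral_div] at hbase
    have hdpos : (0:ℝ) < Real.sqrt (((p+j)! : ℝ) * ((p+k)! : ℝ)) := by
      apply Real.sqrt_pos.2
      have := Nat.factorial_pos (p+j)
      have := Nat.factorial_pos (p+k)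
      positivity
    have hd : ((Real.sqrt (((p+j)! : ℝ) * ((p+k)! : ℝ)) : ℝ) : ℂ) ≠ 0 :=
      Complex.ofReal_ne_zero.2 (ne_of_gt hdpos)
    rw [div_eq_iff hd] at hbase
    have hFexp : F (j,k) = fun β : ℂ =>
        ((x:ℂ)^j * (x:ℂ)^k / ((j ! : ℂ) * (k ! : ℂ))) *
          ((P β : ℂ) * Complex.exp (-((‖β‖ ^ 2 : ℝ) : ℂ)) * β^(p+j) *
            (starRingEnd ℂ β)^(p+k)) := by
      funext β
      rw [hFdef, hHdef]
      simp only
      rw [mul_pow, mul_pow, pow_add, pow_add]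
      ring
    rw [hFexp, MeasureTheory.integral_const_mul, hbase]
    have hsq : Real.sqrt (((p+j)! : ℝ) * ((p+k)! : ℝ)) =
        Real.sqrt ((p+j)! : ℝ) * Real.sqrt ((p+k)! : ℝ) :=
      Real.sqrt_mul (Nat.cast_nonneg _) _
    rw [hsq, hψ (p+j), hψ (p+k), hAdef]
    simp only [map_mul, map_div₀, map_pow, Complex.conj_ofReal, map_natCast]
    have hsj : ((Real.sqrt ((p+j)! : ℝ) : ℝ) : ℂ) ≠ 0 :=
      Complex.ofReal_ne_zero.2 (ne_of_gt (Real.sqrt_pos.2 (Nat.cast_pos.2 (Nat.factorial_pos _))))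
    have hsk : ((Real.sqrt ((p+k)! : ℝ) : ℝ) : ℂ) ≠ 0 :=
      Complex.ofReal_ne_zero.2 (ne_of_gt (Real.sqrt_pos.2 (Nat.cast_pos.2 (Nat.factorial_pos _))))
    have hjf : ((j ! : ℕ) : ℂ) ≠ 0 := Nat.cast_ne_zero.2 (Nat.factorial_ne_zero j)
    have hkf : ((k ! : ℕ) : ℂ) ≠ 0 := Nat.cast_ne_zero.2 (Nat.factorial_ne_zero k)
    have hzc : (z:ℂ) ≠ 0 := Complex.ofReal_ne_zero.2 (ne_of_gt hz)
    rw [hxdef]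
    push_cast
    field_simp
    have e : ((z:ℂ))^j * (z:ℂ)⁻¹^j * ((z:ℂ)^k * (z:ℂ)⁻¹^k) = 1 := by
      rw [← mul_pow, ← mul_pow, mul_inv_cancel₀ hzc, one_pow, one_pow, one_mul]
    linear_combination ((r:ℂ) ^ j * (r:ℂ) ^ k * (z:ℂ) ^ (p * 2) * (N:ℂ) ^ 2 * c (p + j) *
      (starRingEnd ℂ) (c (p + k))) * e
  -- summability of A
  have hAsum : Summable fun j : ℕ => ‖A j‖ := by
    apply Summable.of_nonneg_of_le (fun j => norm_nonneg _) _
      ((Real.summable_pow_div_factorial r).mul_left ‖(N:ℂ) * (z:ℂ)^p‖)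
    intro j
    rw [hAdef]
    rw [norm_mul]
    exact mul_le_mul_of_nonneg_left (aux_term_le c hc r hr.le p j) (norm_nonneg _)
  have hAconj : Summable fun k : ℕ => ‖starRingEnd ℂ (A k)‖ := by
    simpa [RCLike.norm_conj] using hAsum
  have hswap := integral_tsum_of_summable_integral_norm hFint hsumint
  have hL : (∫ β : ℂ, ∑' jk : ℕ × ℕ, F jk β) =
      ((∫ β : ℂ, P β * Real.exp (2*x*β.re - ‖β‖^2) * ‖β‖^(2*p) : ℝ) : ℂ) := by
    rw [show (fun β : ℂ => ∑' jk : ℕ × ℕ, F jk β) =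
        fun β : ℂ => ((P β * Real.exp (2*x*β.re - ‖β‖^2) * ‖β‖^(2*p) : ℝ) : ℂ) from
      funext hptw]
    exact integral_ofReal
  have hR : (∑' jk : ℕ × ℕ, ∫ β : ℂ, F jk β) =
      ((‖(N:ℂ) * (z:ℂ)^p * ∑' m : ℕ, c (p+m) * (r:ℂ)^m / (m ! : ℂ)‖^2 : ℝ) : ℂ) := by
    rw [tsum_congr heach, ← tsum_mul_tsum_of_summable_norm hAsum hAconj, ← Complex.conj_tsum,
      Complex.mul_conj']
    rw [hAdef, tsum_mul_left]
    push_cast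
    ring
  have hfin : ((∫ β : ℂ, P β * Real.exp (2*x*β.re - ‖β‖^2) * ‖β‖^(2*p) : ℝ) : ℂ) =
      ((‖(N:ℂ) * (z:ℂ)^p * ∑' m : ℕ, c (p+m) * (r:ℂ)^m / (m ! : ℂ)‖^2 : ℝ) : ℂ) := by
    rw [← hL, ← hswap, hR]
  exact_mod_cast hfin

lemma aux_wbound (x t u : ℝ) (hx : 0 < x) (ht : 0 ≤ t) (hu : u ≤ t) (q : ℕ) :
    Real.exp (2*x*u - t^2) * t^(2*q) ≤ ((2*q)! : ℝ) * Real.exp ((1+2*x)^2) := by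
  calc Real.exp (2*x*u - t^2) * t^(2*q)
      ≤ Real.exp (2*x*t - t^2) * (((2*q)! : ℝ) * Real.exp t) := by
        exact mul_le_mul (Real.exp_le_exp.2 (by nlinarith))
          (aux_pow_le_fact_mul_exp t ht (2*q)) (by positivity) (Real.exp_nonneg _)
  _ = ((2*q)! : ℝ) * Real.exp ((1+2*x)*t - t^2) := by
        rw [show (1+2*x)*t - t^2 = (2*x*t - t^2) + t by ring, Real.exp_add]; ring
  _ ≤ ((2*q)! : ℝ) * Real.exp ((1+2*x)^2) := by
        have := aux_exp_quad (1+2*x) t (by positivity) ht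
        gcongr

/-- For a `z`-regular pure state `ψ` with Fock coefficients `ψ_n = N c_n z^n/√(n!)`,
`|c_n| ≤ 1`, and `r > 0`, the state `ψ' = e^{-r} exp(r a/z) ψ` (with coefficients
`ψ'_n = N c'_n z^n/√(n!)`, `c'_n = e^{-r} Σ_m c_{n+m} r^m/m!`) satisfies
`‖ψ'‖² ≤ N² e^{z²}`.  Moreover, if `ψ` has an integrable `P`-function `P(β)`
(expressed through its coherent-state matrix elements
`ψ_m ψ̄_n = ∫ P(β) e^{−|β|²} β^m β̄^n/√(m!n!) d²β`), then `ψ'` has `P`-function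
proportional to `exp(2r(Re β/z − 1)) P(β)`, so
`∫ exp(2r(Re β/z − 1)) P(β) d²β ≤ N² e^{z²}` for that `r`. -/
theorem zRegular_S_norm_and_P_bound (c : ℕ → ℂ) (hc : ∀ n, ‖c n‖ ≤ 1)
    (N z r : ℝ) (hN : 0 < N) (hz : 0 < z) (hr : 0 < r)
    (ψ : ℕ → ℂ)
    (hψ : ∀ n, ψ n = (N : ℂ) * c n * (z : ℂ) ^ n / (Real.sqrt (Nat.factorial n) : ℂ))
    (ψ' : ℕ → ℂ)
    (hψ' : ∀ n, ψ' n =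
      (N : ℂ) * ((Real.exp (-r) : ℂ) * ∑' m : ℕ, c (n + m) * (r : ℂ) ^ m /
          (Nat.factorial m : ℂ)) * (z : ℂ) ^ n / (Real.sqrt (Nat.factorial n) : ℂ))
    (P : ℂ → ℝ) (hPint : Integrable P)
    (hrep : ∀ m n : ℕ,
      (∫ β : ℂ, (P β : ℂ) * Complex.exp (-((‖β‖ ^ 2 : ℝ) : ℂ)) * β ^ m *
          (starRingEnd ℂ β) ^ n / (Real.sqrt (Nat.factorial m * Nat.factorial n) : ℂ))
        = ψ m * starRingEnd ℂ (ψ n))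
    (hwint : Integrable (fun β : ℂ => Real.exp (2 * r * (β.re / z - 1)) * P β)) :
    (∑' n : ℕ, ‖ψ' n‖ ^ 2) ≤ N ^ 2 * Real.exp (z ^ 2) ∧
      (∫ β : ℂ, Real.exp (2 * r * (β.re / z - 1)) * P β) ≤ N ^ 2 * Real.exp (z ^ 2) := by
  have hb : ∀ n, ‖ψ' n‖^2 ≤ N^2 * (z^2)^n / (n ! : ℝ) := by
    intro n; rw [hψ' n]; exact aux_psi'_le c hc N z r hN.le hz.le hr.le n
  have hbsum : Summable fun n : ℕ => N^2 * (z^2)^n / (n ! : ℝ) := by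
    refine ((Real.summable_pow_div_factorial (z^2)).mul_left (N^2)).congr fun n => by ring
  have hsum2 : Summable fun n => ‖ψ' n‖^2 :=
    Summable.of_nonneg_of_le (fun n => by positivity) hb hbsum
  have htsum_bound : (∑' n : ℕ, ‖ψ' n‖^2) ≤ N^2 * Real.exp (z^2) := by
    calc (∑' n : ℕ, ‖ψ' n‖^2) ≤ ∑' n : ℕ, N^2 * (z^2)^n / (n ! : ℝ) :=
          Summable.tsum_le_tsum hb hsum2 hbsum
    _ = N^2 * Real.exp (z^2) := by
        rw [aux_rexp_tsum (z^2), ← tsum_mul_left]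
        exact tsum_congr fun n => by ring
  refine ⟨htsum_bound, ?_⟩
  have hx : 0 < r / z := div_pos hr hz
  have hRp := aux_Rp c hc N z r hN hz hr ψ hψ P hPint hrep
  have hpsi'R : ∀ p : ℕ, Real.exp (-(2*r)) / (p ! : ℝ) *
      (∫ β : ℂ, P β * Real.exp (2*(r/z)*β.re - ‖β‖^2) * ‖β‖^(2*p)) = ‖ψ' p‖^2 := by
    intro p
    rw [hRp p, hψ' p]
    have hfp : (0:ℝ) < (p ! : ℝ) := Nat.cast_pos.2 (Nat.factorial_pos p)
    simp only [norm_mul, norm_div, norm_pow, Complex.norm_real, Real.norm_eq_abs]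
    rw [_root_.abs_of_pos hN, _root_.abs_of_pos hz, _root_.abs_of_pos (Real.exp_pos _),
      _root_.abs_of_nonneg (Real.sqrt_nonneg _)]
    rw [div_pow, Real.sq_sqrt (Nat.cast_nonneg _)]
    rw [show Real.exp (-(2*r)) = Real.exp (-r) * Real.exp (-r) by
      rw [← Real.exp_add]; ring_nf]
    field_simp
  -- dominated convergence
  have hGcont : ∀ q : ℕ, Continuous fun β : ℂ =>
      Real.exp (2*(r/z)*β.re - ‖β‖^2) * ‖β‖^(2*q) := by
    intro q
    exact (Real.continuous_exp.comp
      (((continuous_const.mul Complex.continuous_re)).sub ((continuous_norm).pow 2))).mul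
      ((continuous_norm).pow (2*q))
  have hGint : ∀ q : ℕ, Integrable fun β : ℂ =>
      P β * Real.exp (2*(r/z)*β.re - ‖β‖^2) * ‖β‖^(2*q) := by
    intro q
    have h1 : Integrable fun β : ℂ =>
        (Real.exp (2*(r/z)*β.re - ‖β‖^2) * ‖β‖^(2*q)) * P β := by
      apply aux_int_r P hPint _ (hGcont q) (((2*q)! : ℝ) * Real.exp ((1+2*(r/z))^2))
      intro β
      have hre : β.re ≤ ‖β‖ := by
        calc β.re ≤ |β.re| := le_abs_self _
        _ ≤ ‖β‖ := Complex.abs_re_le_norm β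
      have := aux_wbound (r/z) ‖β‖ β.re hx (norm_nonneg β) hre q
      rw [Real.norm_eq_abs, _root_.abs_of_nonneg (by positivity)]
      exact this
    exact h1.congr (Filter.Eventually.of_forall fun β => by ring)
  have hdct : Tendsto
      (fun K => ∫ β : ℂ, Real.exp (-(2*r)) * (P β * Real.exp (2*(r/z)*β.re - ‖β‖^2) *
        ∑ q ∈ Finset.range K, ‖β‖^(2*q) / (q ! : ℝ)))
      atTop (𝓝 (∫ β : ℂ, Real.exp (2 * r * (β.re / z - 1)) * P β)) := by
    apply tendsto_integral_of_dominated_convergence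
      (fun β => Real.exp (2 * r * (β.re / z - 1)) * |P β|)
    · intro K
      apply AEStronglyMeasurable.const_mul
      exact ((hPint.aestronglyMeasurable.mul
        ((Real.continuous_exp.comp
          (((continuous_const.mul Complex.continuous_re)).sub
            ((continuous_norm).pow 2))).aestronglyMeasurable)).mul
        ((continuous_finset_sum _ fun q _ => ((continuous_norm).pow (2*q)).div_const _).aestronglyMeasurable))
    · refine hwint.abs.congr (Filter.Eventually.of_forall fun β => ?_)
      show |Real.exp (2 * r * (β.re / z - 1)) * P β| = _
      rw [abs_mul, _root_.abs_of_pos (Real.exp_pos _)]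
    · intro K
      refine Filter.Eventually.of_forall fun β => ?_
      have hsnn : (0:ℝ) ≤ ∑ q ∈ Finset.range K, ‖β‖^(2*q) / (q ! : ℝ) := by positivity
      have hsle : (∑ q ∈ Finset.range K, ‖β‖^(2*q) / (q ! : ℝ)) ≤ Real.exp (‖β‖^2) := by
        refine le_trans (le_of_eq (Finset.sum_congr rfl fun q _ => by rw [pow_mul])) 
          (Real.sum_le_exp_of_nonneg (by positivity) K)
      rw [Real.norm_eq_abs, abs_mul, abs_mul, abs_mul, _root_.abs_of_pos (Real.exp_pos _),
        _root_.abs_of_pos (Real.exp_pos _), _root_.abs_of_nonneg hsnn]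
      calc Real.exp (-(2*r)) * (|P β| * Real.exp (2*(r/z)*β.re - ‖β‖^2) *
            (∑ q ∈ Finset.range K, ‖β‖^(2*q) / (q ! : ℝ)))
          ≤ Real.exp (-(2*r)) * (|P β| * Real.exp (2*(r/z)*β.re - ‖β‖^2) *
            Real.exp (‖β‖^2)) := by gcongr
      _ = Real.exp (2 * r * (β.re / z - 1)) * |P β| := by
          rw [show 2 * r * (β.re / z - 1) = (-(2*r)) + ((2*(r/z)*β.re - ‖β‖^2) + ‖β‖^2)
            by ring, Real.exp_add, Real.exp_add]
          ring
    · refine Filter.Eventually.of_forall fun β => ?_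
      have h1 : Tendsto (fun K => ∑ q ∈ Finset.range K, ‖β‖^(2*q) / (q ! : ℝ)) atTop
          (𝓝 (Real.exp (‖β‖^2))) := by
        refine ((aux_rexp_hasSum (‖β‖^2)).tendsto_sum_nat).congr fun K =>
          Finset.sum_congr rfl fun q _ => by rw [pow_mul]
      have h2 := h1.const_mul (Real.exp (-(2*r)) * (P β * Real.exp (2*(r/z)*β.re - ‖β‖^2)))
      have h3 : (Real.exp (-(2*r)) * (P β * Real.exp (2*(r/z)*β.re - ‖β‖^2))) * Real.exp (‖β‖^2)
          = Real.exp (2 * r * (β.re / z - 1)) * P β := by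
        rw [show 2 * r * (β.re / z - 1) = (-(2*r)) + ((2*(r/z)*β.re - ‖β‖^2) + ‖β‖^2) by ring,
          Real.exp_add, Real.exp_add]
        ring
      rw [← h3]
      exact h2.congr fun K => by ring
  have hGKint : ∀ K : ℕ, (∫ β : ℂ, Real.exp (-(2*r)) * (P β * Real.exp (2*(r/z)*β.re - ‖β‖^2) *
        ∑ q ∈ Finset.range K, ‖β‖^(2*q) / (q ! : ℝ))) = ∑ p ∈ Finset.range K, ‖ψ' p‖^2 := by
    intro K
    have hsplit : (fun β : ℂ => Real.exp (-(2*r)) * (P β * Real.exp (2*(r/z)*β.re - ‖β‖^2) *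
        ∑ q ∈ Finset.range K, ‖β‖^(2*q) / (q ! : ℝ))) =
        fun β : ℂ => ∑ q ∈ Finset.range K, (Real.exp (-(2*r)) / (q ! : ℝ)) *
          (P β * Real.exp (2*(r/z)*β.re - ‖β‖^2) * ‖β‖^(2*q)) := by
      funext β
      rw [Finset.mul_sum, Finset.mul_sum]
      exact Finset.sum_congr rfl fun q _ => by ring
    rw [hsplit, integral_finset_sum _ (fun q _ => ((hGint q).const_mul _))]
    refine Finset.sum_congr rfl fun q _ => ?_
    rw [MeasureTheory.integral_const_mul]
    exact hpsi'R q
  have htend2 : Tendsto (fun K => ∑ p ∈ Finset.range K, ‖ψ' p‖^2) atTop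
      (𝓝 (∑' p : ℕ, ‖ψ' p‖^2)) := hsum2.hasSum.tendsto_sum_nat
  have heq : (∫ β : ℂ, Real.exp (2 * r * (β.re / z - 1)) * P β) = ∑' p : ℕ, ‖ψ' p‖^2 :=
    tendsto_nhds_unique (hdct.congr hGKint) htend2
  rw [heq]
  exact htsum_bound
end
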